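/- Let σ(u₁,u₃) = u₁³/3 − u₃, and define f₂(u) = −σ₃(u)/σ₁(u) and g₂(u) = ℘₁₁(2u)/2 where ℘₁₁(v) = (σ₁(v)² − σ(v)σ₁₁(v))/σ(v)². Then on the set where u₁ ≠ 0, 4u₁³ − 3u₃ ≠ 0 one has f₂(u) − g₂(u) = σ(u) · 3(10u₁³ − 3u₃) / (u₁²(4u₁³ − 3u₃)²). -/

import Mathlib

noncomputable section

def σr (u₁ u₃ : ℂ) : ℂ := u₁ ^ 3 / 3 - u₃
def S1 (u₁ u₃ : ℂ) : ℂ := u₁ ^ 2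
def S3 (u₁ u₃ : ℂ) : ℂ := -1
def S11 (u₁ u₃ : ℂ) : ℂ := 2 * u₁
/-- `℘₁₁` expressed via the sigma function. -/
def P11s (v₁ v₃ : ℂ) : ℂ :=
  ((S1 v₁ v₃) ^ 2 - σr v₁ v₃ * S11 v₁ v₃) / (σr v₁ v₃) ^ 2
def f2 (u₁ u₃ : ℂ) : ℂ := -(S3 u₁ u₃) / S1 u₁ u₃
def g2 (u₁ u₃ : ℂ) : ℂ := P11s (2 * u₁) (2 * u₃) / 2

theorem stmt_10 (u₁ u₃ : ℂ) (h₁ : u₁ ≠ 0) (h₂ : 4 * u₁ ^ 3 - 3 * u₃ ≠ 0) :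
    f2 u₁ u₃ - g2 u₁ u₃ =
      σr u₁ u₃ * (3 * (10 * u₁ ^ 3 - 3 * u₃)) /
        (u₁ ^ 2 * (4 * u₁ ^ 3 - 3 * u₃) ^ 2) := by
  have hσ : (2*u₁)^3/3 - 2*u₃ ≠ 0 := by
    intro h
    apply h₂
    have : 4*u₁^3 - 3*u₃ = 3/2 * ((2*u₁)^3/3 - 2*u₃) := by ring
    rw [this, h, mul_zero]
  simp only [f2, g2, P11s, S1, S3, S11, σr]
  have h3 : -(u₁ ^ 3 * u₃ * 576) + u₁ ^ 6 * 384 + u₃ ^ 2 * 216 ≠ 0 := by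
    intro h
    apply h₂
    have h' : (4 * u₁ ^ 3 - 3 * u₃) ^ 2 * 24 = 0 := by rw [← h]; ring
    have h'' : (4 * u₁ ^ 3 - 3 * u₃) ^ 2 = 0 := by
      have : (24 : ℂ) ≠ 0 := by norm_num
      exact (mul_eq_zero.mp h').resolve_right this
    exact pow_eq_zero_iff (n := 2) (by norm_num) |>.mp h''
  field_simp
  have h4 : (2 * u₁) ^ 3 - 3 * (2 * u₃) ≠ 0 := by
    intro h
    apply h₂
    have : 4 * u₁ ^ 3 - 3 * u₃ = ((2 * u₁) ^ 3 - 3 * (2 * u₃)) / 2 := by ring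
    rw [this, h, zero_div]
  have h5 : u₁ ^ 3 * 4 - 3 * u₃ ≠ 0 := by rw [mul_comm]; exact h₂
  field_simp
  rw [show (2:ℂ) ^ 2 = 4 by norm_num]
  field_simp
  ring
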